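/- Let r ≥ 2, let X be a set, and let C ⊆ X^r cover X^{r+1}. With C_i ⊆ X^{r+1} (1 ≤ i ≤ r+1) the set of sequences whose length-r subsequence obtained by deleting the i-th coordinate lies in C, K = ⋂_{i=1}^{r+1} C_i, P_i = C_i \ ⋃_{j≠i} C_j, R = X^{r+1} \ (K ∪ ⋃_i P_i), and ⟨R⟩ the symmetric closure of R, the set K \ ⟨R⟩ is symmetric, i.e., closed under all permutations of the r+1 coordinates. -/

import Mathlib

open MeasureTheory Filter Topology ENNReal

/-- `x` covers `a` if `x` is a subsequence of `a`. -/
def Covers {X : Type*} {r k : ℕ} (x : Fin r → X) (a : Fin k → X) : Prop :=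
  ∃ g : Fin r → Fin k, StrictMono g ∧ ∀ i, a (g i) = x i

/-- `C ⊆ X^r` is a covering `(k-r)`-insertion code over `X`: every sequence in `X^k`
is covered by some sequence in `C`. -/
def IsCoveringCode {X : Type*} (r k : ℕ) (C : Set (Fin r → X)) : Prop :=
  ∀ a : Fin k → X, ∃ x ∈ C, Covers x a

/-- Minimum size of a covering `(k-r)`-insertion code over the alphabet `[n]`. -/
noncomputable def covNum (n k r : ℕ) : ℕ :=
  sInf {m | ∃ C : Finset (Fin r → Fin n), IsCoveringCode r k (↑C : Set (Fin r → Fin n)) ∧ C.card = m}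

/-- The unit cube `[0,1]^r`. -/
def unitCube (r : ℕ) : Set (Fin r → ℝ) := {x | ∀ i, x i ∈ Set.Icc (0 : ℝ) 1}

/-- `C ⊆ [0,1]^r` covers `[0,1]^k`. -/
def CoversCube (r k : ℕ) (C : Set (Fin r → ℝ)) : Prop :=
  ∀ a ∈ unitCube k, ∃ x ∈ C, Covers x a

/-- Delete the `i`-th coordinate of a length `r+1` sequence. -/
def deleteAt {X : Type*} {r : ℕ} (i : Fin (r + 1)) (x : Fin (r + 1) → X) : Fin r → X :=
  x ∘ i.succAbove

/-- `extSet C i` is the set `C_i` of sequences in `X^{r+1}` whose subsequence obtained by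
deleting the `i`-th coordinate belongs to `C`. -/
def extSet {X : Type*} {r : ℕ} (C : Set (Fin r → X)) (i : Fin (r + 1)) :
    Set (Fin (r + 1) → X) :=
  {x | deleteAt i x ∈ C}

/-- A set of sequences is symmetric if it is closed under permuting the coordinates. -/
def IsSymmetric {X : Type*} {k : ℕ} (M : Set (Fin k → X)) : Prop :=
  ∀ x ∈ M, ∀ σ : Equiv.Perm (Fin k), x ∘ σ ∈ M

/-- The symmetric closure of a set of sequences. -/
def SymClosure {X : Type*} {k : ℕ} (M : Set (Fin k → X)) : Set (Fin k → X) :=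
  {x | ∃ σ : Equiv.Perm (Fin k), x ∘ σ ∈ M}

/-- A Turán `(n,k,r)`-system: a family of `r`-element subsets of `[n]` such that every
`k`-element subset of `[n]` contains a member of the family. -/
def IsTuranSystem (n k r : ℕ) (F : Finset (Finset (Fin n))) : Prop :=
  (∀ A ∈ F, A.card = r) ∧ ∀ K : Finset (Fin n), K.card = k → ∃ A ∈ F, A ⊆ K

/-- Minimum size of a Turán `(n,k,r)`-system. -/
noncomputable def turanNum (n k r : ℕ) : ℕ :=
  sInf {m | ∃ F : Finset (Finset (Fin n)), IsTuranSystem n k r F ∧ F.card = m}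


lemma swap_succAbove {r : ℕ} (i : Fin r) (k : Fin r) :
    Equiv.swap i.castSucc i.succ (Fin.succAbove i.castSucc k) = Fin.succAbove i.succ k := by
  rcases lt_trichotomy k i with h | rfl | h
  · rw [Fin.succAbove_of_castSucc_lt _ _ (by simpa using h),
      Fin.succAbove_of_castSucc_lt _ _ (Fin.castSucc_lt_succ_iff.mpr h.le),
      Equiv.swap_apply_of_ne_of_ne (by simp [Fin.ext_iff]; omega) (by simp [Fin.ext_iff]; omega)]
  · rw [Fin.succAbove_of_le_castSucc _ _ le_rfl, Equiv.swap_apply_right,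
      Fin.succAbove_of_castSucc_lt _ _ Fin.castSucc_lt_succ]
  · rw [Fin.succAbove_of_le_castSucc _ _ (Fin.castSucc_le_castSucc_iff.mpr h.le),
      Fin.succAbove_of_le_castSucc _ _ (Fin.succ_le_castSucc_iff.mpr h),
      Equiv.swap_apply_of_ne_of_ne (by simp [Fin.ext_iff]; omega) (by simp [Fin.ext_iff]; omega)]

lemma swap_succAbove' {r : ℕ} (i : Fin r) (k : Fin r) :
    Equiv.swap i.castSucc i.succ (Fin.succAbove i.succ k) = Fin.succAbove i.castSucc k := by
  rw [← swap_succAbove i k, Equiv.swap_apply_self]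

/-- For `r ≥ 2`, a set `X` and `C ⊆ X^r` covering `X^{r+1}`, with
`K = ⋂ᵢ Cᵢ`, `Pᵢ = Cᵢ \ ⋃_{j≠i} Cⱼ`, `R = X^{r+1} \ (K ∪ ⋃ᵢ Pᵢ)` and `⟨R⟩` the symmetric
closure of `R`, the set `K \ ⟨R⟩` is symmetric. -/
theorem kernel_diff_symClosure_symmetric {X : Type*} {r : ℕ} (hr : 2 ≤ r)
    (C : Set (Fin r → X)) (hcov : IsCoveringCode r (r + 1) C) :
    IsSymmetric ((⋂ i, extSet C i) \
      SymClosure (Set.univ \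
        ((⋂ i, extSet C i) ∪
          ⋃ i, (extSet C i \ ⋃ j, ⋃ (_ : j ≠ i), extSet C j)))) := by
  set K : Set (Fin (r+1) → X) := ⋂ i, extSet C i with hK
  set R : Set (Fin (r+1) → X) := Set.univ \
      (K ∪ ⋃ i, (extSet C i \ ⋃ j, ⋃ (_ : j ≠ i), extSet C j)) with hRdef
  -- step lemma
  have step : ∀ (i : Fin r) (z : Fin (r+1) → X), z ∈ K →
      z ∘ (Equiv.swap i.castSucc i.succ) ∉ R →
      z ∘ (Equiv.swap i.castSucc i.succ) ∈ K := by
    intro i z hz hnR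
    set y := z ∘ (Equiv.swap i.castSucc i.succ) with hy
    have h1 : y ∈ extSet C i.castSucc := by
      have : deleteAt i.castSucc y = deleteAt i.succ z := by
        funext k
        simp only [deleteAt, Function.comp_apply, hy, swap_succAbove]
      show deleteAt i.castSucc y ∈ C
      rw [this]
      exact Set.mem_iInter.mp hz i.succ
    have h2 : y ∈ extSet C i.succ := by
      have : deleteAt i.succ y = deleteAt i.castSucc z := by
        funext k
        simp only [deleteAt, Function.comp_apply, hy, swap_succAbove']
      show deleteAt i.succ y ∈ C
      rw [this]
      exact Set.mem_iInter.mp hz i.castSucc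
    have hmem : y ∈ K ∪ ⋃ i, (extSet C i \ ⋃ j, ⋃ (_ : j ≠ i), extSet C j) := by
      by_contra h
      exact hnR ⟨Set.mem_univ _, h⟩
    rcases hmem with h | h
    · exact h
    · exfalso
      obtain ⟨_, ⟨j, rfl⟩, hj⟩ := h
      obtain ⟨hyj, hynot⟩ := hj
      have hne : i.castSucc ≠ j ∨ i.succ ≠ j := by
        by_contra hc
        push_neg at hc
        exact (show i.castSucc < i.succ from Fin.castSucc_lt_succ).ne (hc.1.trans hc.2.symm)
      rcases hne with hne | hne
      · exact hynot (Set.mem_iUnion.mpr ⟨i.castSucc, Set.mem_iUnion.mpr ⟨hne, h1⟩⟩)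
      · exact hynot (Set.mem_iUnion.mpr ⟨i.succ, Set.mem_iUnion.mpr ⟨hne, h2⟩⟩)
  -- closure induction
  have key : ∀ σ : Equiv.Perm (Fin (r+1)), ∀ z : Fin (r+1) → X, z ∈ K →
      (∀ τ : Equiv.Perm (Fin (r+1)), z ∘ τ ∉ R) → z ∘ σ ∈ K := by
    intro σ
    have hσ : σ ∈ Submonoid.closure
        (Set.range fun i : Fin r ↦ Equiv.swap i.castSucc i.succ) := by
      rw [Equiv.Perm.mclosure_swap_castSucc_succ]; trivial
    induction hσ using Submonoid.closure_induction with
    | mem s hs =>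
      obtain ⟨i, rfl⟩ := hs
      intro z hz hR
      exact step i z hz (hR _)
    | one =>
      intro z hz _
      simpa using hz
    | mul a b _ _ iha ihb =>
      intro z hz hR
      have hza : z ∘ a ∈ K := iha z hz hR
      have hzaR : ∀ τ : Equiv.Perm (Fin (r+1)), (z ∘ a) ∘ τ ∉ R := by
        intro τ h
        exact hR (a * τ) (by rw [Equiv.Perm.coe_mul, ← Function.comp_assoc]; exact h)
      have := ihb (z ∘ a) hza hzaR
      rwa [Equiv.Perm.coe_mul, ← Function.comp_assoc]
  rintro x ⟨hxK, hxR⟩ σ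
  refine ⟨key σ x hxK ?_, ?_⟩
  · intro τ h
    exact hxR ⟨τ, h⟩
  · rintro ⟨τ, h⟩
    exact hxR ⟨σ * τ, by rw [Equiv.Perm.coe_mul, ← Function.comp_assoc]; exact h⟩
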